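/- arXiv:1611.08936 — 4 statements merged into one kernel-verified Lean document; each statement's English description precedes it below -/
import Mathlib

section
/- Let θ be a real random variable with density f such that f(z - s)/f(z) ≤ c for all z with f(z) ≠ 0 and all |s| ≤ σ, and suppose the set {z : f(z) = 0} has Lebesgue measure zero. Then for any two real numbers x, y with |x - y| ≤ σ and any measurable set O ⊆ ℝ, P(x + θ ∈ O) ≤ c · P(y + θ ∈ O). -/
open MeasureTheory

/-- If the density f has a zero set of Lebesgue measure zero and bounded ratio
f(z-s) ≤ c f(z) wherever f(z) ≠ 0, for all |s| ≤ σ, then for adjacent x, y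
(|x - y| ≤ σ) and any measurable O, P(x + θ ∈ O) ≤ c · P(y + θ ∈ O). -/
theorem noise_adding_eps_dp (f : ℝ → ℝ) (c σ : ℝ) (hc : 1 ≤ c) (hσ : 0 ≤ σ)
    (hf_nonneg : ∀ z, 0 ≤ f z)
    (hf_int : Integrable f)
    (hzero : volume {z : ℝ | f z = 0} = 0)
    (hratio : ∀ s : ℝ, |s| ≤ σ → ∀ z : ℝ, f z ≠ 0 → f (z - s) ≤ c * f z) :
    ∀ x y : ℝ, |x - y| ≤ σ → ∀ O : Set ℝ, MeasurableSet O →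
      ∫ z in O, f (z - x) ≤ c * ∫ z in O, f (z - y) := by
  intro x y hxy O hO
  have hint1 : Integrable (fun z => f (z - x)) := hf_int.comp_sub_right x
  have hint2 : Integrable (fun z => f (z - y)) := hf_int.comp_sub_right y
  have hzero' : volume {z : ℝ | f (z - y) = 0} = 0 := by
    have h : {z : ℝ | f (z - y) = 0} = (fun z => z + (-y)) ⁻¹' {z : ℝ | f z = 0} := by
      ext z; simp [sub_eq_add_neg]
    rw [h, measure_preimage_add_right, hzero]
  have hae0 : ∀ᵐ z : ℝ, f (z - y) ≠ 0 := by
    rw [ae_iff]; simpa [not_not] using hzero'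
  have hae : ∀ᵐ z : ℝ, f (z - x) ≤ c * f (z - y) := by
    filter_upwards [hae0] with z hz
    have := hratio (x - y) hxy (z - y) hz
    simpa [sub_sub, sub_add_cancel] using this
  calc ∫ z in O, f (z - x) ≤ ∫ z in O, c * f (z - y) := by
        refine setIntegral_mono_ae hint1.integrableOn (hint2.const_mul c).integrableOn hae
    _ = c * ∫ z in O, f (z - y) := integral_const_mul c _
end

section
/- Suppose f is a continuous probability density on ℝ, σ > 0, and there is an interval [a, b] with b - a > σ on which f vanishes identically, while f(z) > 0 for all z in (b, b + σ]. Then for any ε > 0, the mechanism A(x) = x + θ (θ with density f) is not ε-differentially private: there exist x, y with |x - y| ≤ σ and a measurable set O with P(x + θ ∈ O) > 0 but P(y + θ ∈ O) = 0. -/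
open MeasureTheory Set

/-- If a continuous density f vanishes on an interval [a,b] of length > σ but is
positive on (b, b+σ], then the noise-adding mechanism fails ε-differential
privacy for every ε: some adjacent pair x, y and set O have
P(x + θ ∈ O) > 0 while P(y + θ ∈ O) = 0. -/
theorem zero_interval_not_eps_dp (f : ℝ → ℝ) (a b σ : ℝ)
    (hab : a < b) (hσ : 0 < σ) (hgap : σ < b - a)
    (hf_cont : Continuous f)
    (hf_nonneg : ∀ z, 0 ≤ f z)
    (hf_one : ∫ z : ℝ, f z = 1)
    (hzero : ∀ z ∈ Icc a b, f z = 0)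
    (hpos : ∀ z ∈ Ioc b (b + σ), 0 < f z) :
    ∃ (x y : ℝ) (O : Set ℝ), MeasurableSet O ∧ |x - y| ≤ σ ∧
      (0 < ∫ z in O, f (z - x)) ∧ (∫ z in O, f (z - y)) = 0 := by
  refine ⟨0, σ, Ioc b (b + σ), measurableSet_Ioc, ?_, ?_, ?_⟩
  · rw [abs_of_nonpos (by linarith)]; linarith
  · simp only [sub_zero]
    have hle : b ≤ b + σ := by linarith
    have hii : IntervalIntegrable f volume b (b + σ) :=
      hf_cont.intervalIntegrable _ _
    have hpos' : 0 < ∫ z in b..(b + σ), f z :=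
      intervalIntegral.intervalIntegral_pos_of_pos_on hii
        (fun x hx => hpos x ⟨hx.1, hx.2.le⟩) (by linarith)
    rwa [intervalIntegral.integral_of_le hle] at hpos'
  · apply setIntegral_eq_zero_of_forall_eq_zero
    intro z hz
    exact hzero (z - σ) ⟨by linarith [hz.1], by linarith [hz.2]⟩
end

section
/- Let θ have density f and suppose: (i) f(z - s) ≤ c · f(z) for all z with f(z) ≠ 0 and all |s| ≤ σ; and let Z = {z : f(z) = 0}. Then for any x, y with y = x + σ' where |σ'| ≤ σ, and any measurable O, P(x + θ ∈ O) ≤ c · P(y + θ ∈ O) + ∫_{Z} f(z + σ') dz. That is, the one-dimensional mechanism A(x) = x + θ is (log c, δ)-differentially private with δ = sup_{|σ'|≤σ} ∫_{Z} f(z + σ') dz. -/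
open MeasureTheory

/-- (log c, δ)-DP with δ given by the mass that the shifted density puts on the
zero set Z = {z : f z = 0}: for |x - y| ≤ σ and measurable O,
P(x + θ ∈ O) ≤ c · P(y + θ ∈ O) + ∫_Z f(z - x + y) dz. -/
theorem noise_adding_eps_delta_dp (f : ℝ → ℝ) (c σ : ℝ) (hc : 1 ≤ c) (hσ : 0 ≤ σ)
    (hf_nonneg : ∀ z, 0 ≤ f z)
    (hf_int : Integrable f)
    (hratio : ∀ s : ℝ, |s| ≤ σ → ∀ z : ℝ, f z ≠ 0 → f (z - s) ≤ c * f z) :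
    ∀ x y : ℝ, |x - y| ≤ σ → ∀ O : Set ℝ, MeasurableSet O →
      ∫ z in O, f (z - x) ≤ c * (∫ z in O, f (z - y)) +
        ∫ z in {z : ℝ | f z = 0}, f (z - x + y) := by
  intro x y hxy O hO
  set s : ℝ := x - y with hs
  -- a measurable, everywhere-nonnegative representative of f
  obtain ⟨g0, hg0m, hfg0⟩ := hf_int.1
  set g : ℝ → ℝ := fun z => max (g0 z) 0 with hgdef
  have hgm : Measurable g := hg0m.measurable.max measurable_const
  have hg_nonneg : ∀ z, 0 ≤ g z := fun z => le_max_right _ _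
  have hfg : f =ᵐ[volume] g := by
    filter_upwards [hfg0] with z hz
    simp [hgdef, ← hz, max_eq_left (hf_nonneg z)]
  have hqmp : ∀ a : ℝ, Measure.QuasiMeasurePreserving (fun z : ℝ => z - a) volume volume :=
    fun a => (measurePreserving_sub_right volume a).quasiMeasurePreserving
  have hshift : ∀ a : ℝ, (fun z => f (z - a)) =ᵐ[volume] fun z => g (z - a) :=
    fun a => hfg.comp_tendsto (hqmp a).tendsto_ae
  have hg_int : Integrable g := hf_int.congr hfg
  have hg_int' : ∀ a : ℝ, Integrable (fun z => g (z - a)) := fun a => hg_int.comp_sub_right a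
  -- the ratio bound for g, a.e.
  have hrg : ∀ᵐ z ∂(volume : Measure ℝ), g z ≠ 0 → g (z - s) ≤ c * g z := by
    filter_upwards [hfg, hshift s] with z h1 h2 hne
    rw [← h2, ← h1]
    exact hratio s hxy z (by rw [h1]; exact hne)
  set Zg : Set ℝ := {z | g z = 0} with hZgdef
  have hZg : MeasurableSet Zg := hgm (measurableSet_singleton 0)
  set ind : ℝ → ℝ := Zg.indicator (fun w => g (w - s)) with hinddef
  have hind_nonneg : ∀ z, 0 ≤ ind z :=
    fun z => Set.indicator_nonneg (fun w _ => hg_nonneg _) z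
  have hind_int : Integrable ind := (hg_int' s).indicator hZg
  -- a.e. pointwise key inequality
  have key : ∀ᵐ z ∂(volume : Measure ℝ), g (z - s) ≤ c * g z + ind z := by
    filter_upwards [hrg] with z hz
    by_cases h : g z = 0
    · have : ind z = g (z - s) := Set.indicator_of_mem (by exact h) _
      rw [this, h]
      simp
    · have h1 := hz h
      have h2 : ind z = 0 := Set.indicator_of_notMem (by exact h) _
      rw [h2]
      linarith
  have key2 : ∀ᵐ z ∂(volume : Measure ℝ), g (z - x) ≤ c * g (z - y) + ind (z - y) := by
    have := (hqmp y).tendsto_ae.eventually key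
    filter_upwards [this] with z hz
    have : z - y - s = z - x := by rw [hs]; ring
    rwa [this] at hz
  have hRHS_int : Integrable (fun z => c * g (z - y) + ind (z - y)) :=
    ((hg_int' y).const_mul c).add (hind_int.comp_sub_right y)
  calc ∫ z in O, f (z - x) = ∫ z in O, g (z - x) :=
        integral_congr_ae (ae_restrict_of_ae (hshift x))
    _ ≤ ∫ z in O, (c * g (z - y) + ind (z - y)) :=
        integral_mono_ae (hg_int' x).integrableOn hRHS_int.integrableOn
          (ae_restrict_of_ae key2)
    _ = c * (∫ z in O, g (z - y)) + ∫ z in O, ind (z - y) := by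
        rw [integral_add ((hg_int' y).const_mul c).integrableOn
          (hind_int.comp_sub_right y).integrableOn, integral_const_mul]
    _ ≤ c * (∫ z in O, g (z - y)) + ∫ z, ind (z - y) := by
        gcongr
        exact (Filter.Eventually.of_forall fun z => hind_nonneg _)
        · exact hind_int.comp_sub_right y
        · exact Measure.restrict_le_self
    _ = c * (∫ z in O, f (z - y)) + ∫ z in {z : ℝ | f z = 0}, f (z - x + y) := by
        congr 1
        · congr 1
          exact (integral_congr_ae (ae_restrict_of_ae (hshift y))).symm
        · rw [integral_sub_right_eq_self ind y, hinddef, integral_indicator hZg]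
          have hsets : Zg =ᵐ[volume] {z : ℝ | f z = 0} := by
            rw [Filter.eventuallyEq_set]
            filter_upwards [hfg] with z hz
            simp [hZgdef, hz]
          rw [setIntegral_congr_set hsets]
          rw [← integral_congr_ae (ae_restrict_of_ae (hshift s))]
          have : ∀ w : ℝ, w - s = w - x + y := fun w => by rw [hs]; ring
          simp_rw [this]
end

section
/- If a probability density f on ℝ is continuous at some point c₀ with f(c₀) = 0, and f is not identically zero in any neighborhood to one side, then for every ε ≥ 0 and every σ > 0 the mechanism A(x) = x + θ (θ with density f) fails ε-differential privacy: the supremum over adjacent x, y and sets O of P(x+θ∈O)/P(y+θ∈O) is infinite. In particular, the density f(z) = (|z|/2)e^{-|z|} is not ε-differentially private for any ε, since f(0)=0. -/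
open MeasureTheory

/-- The density f(z) = (|z|/2)e^{-|z|} vanishes at 0, and the corresponding
noise-adding mechanism is not ε-differentially private for any ε ≥ 0 and any
adjacency parameter σ > 0. -/
theorem abs_exp_density_not_eps_dp
    (f : ℝ → ℝ) (hf : ∀ z, f z = (|z| / 2) * Real.exp (-|z|)) :
    ∀ ε : ℝ, 0 ≤ ε → ∀ σ : ℝ, 0 < σ →
      ¬ (∀ x y : ℝ, |x - y| ≤ σ → ∀ O : Set ℝ, MeasurableSet O →
          ∫ u in O, f (u - x) ≤ Real.exp ε * ∫ u in O, f (u - y)) := by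
  intro ε hε σ hσ H
  have hfc : Continuous f := by
    have : Continuous fun z : ℝ => (|z| / 2) * Real.exp (-|z|) := by fun_prop
    simpa [funext hf] using this
  set m : ℝ := σ / 4 * Real.exp (-(2 * σ)) with hm
  have hmpos : 0 < m := by positivity
  set δ : ℝ := min (σ / 2) (m * Real.exp (-ε)) with hδ
  have hδpos : 0 < δ := lt_min (by linarith) (by positivity)
  have hδle : δ ≤ σ / 2 := min_le_left _ _
  have hδle2 : δ ≤ m * Real.exp (-ε) := min_le_right _ _
  set O : Set ℝ := Set.Ioc (-δ) δ with hO
  have hOmeas : MeasurableSet O := measurableSet_Ioc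
  have hvol : volume O = ENNReal.ofReal (2 * δ) := by
    rw [hO, Real.volume_Ioc]; ring_nf
  have hvolR : (volume O).toReal = 2 * δ := by
    rw [hvol, ENNReal.toReal_ofReal (by linarith)]
  have key := H σ 0 (by rw [sub_zero, abs_of_pos hσ]) O hOmeas
  simp only [sub_zero] at key
  -- integrability
  have hint1 : IntegrableOn (fun u => f (u - σ)) O volume :=
    ((hfc.comp (continuous_id.sub continuous_const)).integrableOn_Icc (a := -δ) (b := δ)).mono_set
      Set.Ioc_subset_Icc_self
  have hint2 : IntegrableOn f O volume :=
    (hfc.integrableOn_Icc (a := -δ) (b := δ)).mono_set Set.Ioc_subset_Icc_self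
  -- pointwise lower bound
  have hptlow : ∀ u ∈ O, m ≤ f (u - σ) := by
    intro u hu
    obtain ⟨hu1, hu2⟩ := hu
    have hu2' : u ≤ σ / 2 := le_trans hu2 hδle
    have hu1' : -(σ / 2) ≤ u := by
      have := neg_le_neg hδle
      linarith [lt_of_le_of_lt this (lt_of_le_of_lt (le_refl _) (lt_of_lt_of_le hu1 (le_refl u)))]
    have h1 : σ / 2 ≤ σ - u := by linarith
    have h2 : σ - u ≤ 2 * σ := by linarith
    have habs : |u - σ| = σ - u := by rw [abs_sub_comm, abs_of_nonneg (by linarith)]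
    rw [hf, habs]
    have hexp : Real.exp (-(2 * σ)) ≤ Real.exp (-(σ - u)) :=
      Real.exp_le_exp.mpr (by linarith)
    calc m = σ / 4 * Real.exp (-(2 * σ)) := hm
      _ ≤ (σ - u) / 2 * Real.exp (-(σ - u)) := by
          apply mul_le_mul (by linarith) hexp (Real.exp_pos _).le (by linarith)
  -- lower bound on LHS
  have hlow : m * (2 * δ) ≤ ∫ u in O, f (u - σ) := by
    have := MeasureTheory.setIntegral_ge_of_const_le hOmeas
      (by rw [hvol]; exact ENNReal.ofReal_ne_top) hptlow hint1
    rw [Measure.real_def, hvolR, smul_eq_mul] at this; linarith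
  -- upper bound on RHS
  have hup : ∫ u in O, f u ≤ δ / 2 * (2 * δ) := by
    have h1 : ∫ u in O, f u ≤ ∫ _u in O, (δ / 2 : ℝ) := by
      apply MeasureTheory.setIntegral_mono_on hint2 ((integrableOn_const_iff enorm_ne_top).mpr (Or.inr (by
        rw [hvol]; exact ENNReal.ofReal_lt_top))) hOmeas
      intro u hu
      obtain ⟨hu1, hu2⟩ := hu
      have habs : |u| ≤ δ := abs_le.mpr ⟨hu1.le, hu2⟩
      rw [hf]
      calc |u| / 2 * Real.exp (-|u|) ≤ |u| / 2 * 1 := by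
            apply mul_le_mul_of_nonneg_left (Real.exp_le_one_iff.mpr (by
              simp [abs_nonneg u])) (by positivity)
        _ = |u| / 2 := by ring
        _ ≤ δ / 2 := by linarith
    rw [setIntegral_const, Measure.real_def, hvolR, smul_eq_mul] at h1
    linarith
  -- combine
  have hfinal : m * (2 * δ) ≤ Real.exp ε * (δ / 2 * (2 * δ)) := by
    refine le_trans hlow (le_trans key ?_)
    exact mul_le_mul_of_nonneg_left hup (Real.exp_pos _).le
  have hδm : Real.exp ε * δ ≤ m := by
    calc Real.exp ε * δ ≤ Real.exp ε * (m * Real.exp (-ε)) :=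
          mul_le_mul_of_nonneg_left hδle2 (Real.exp_pos _).le
      _ = m := by rw [show Real.exp ε * (m * Real.exp (-ε)) = Real.exp ε * Real.exp (-ε) * m by ring, ← Real.exp_add]; simp
  nlinarith [Real.exp_pos ε, hmpos, hδpos]
end
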